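/- arXiv:2402.17221 — 2 statements merged into one kernel-verified Lean document; each statement's English description precedes it below -/
import Mathlib

section
/- For integers d ≥ 0 and n ≥ 0, the expected total number of generators satisfies E γ_{d,n} = Σ_{k=0}^d C(d,k) E ι_{k,n}, where ι_{k,n} is the expected number of interior generators in dimension k after n observations (and ι_{0,n} = 1 if n = 0, else 0). -/
open MeasureTheory ProbabilityTheory Set

/-- The record-setting region determined by points `X i : κ → ℝ` (coordinate set `κ`). -/
def RSreg {κ : Type*} {n : ℕ} (X : Fin n → κ → ℝ) : Set (κ → ℝ) :=
  {x | (∀ j, 0 ≤ x j) ∧ ∀ i, ¬ ∀ j, x j < X i j}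

/-- A generator: a minimal element of the record-setting region under coordinatewise `≤`. -/
def IsGen {κ : Type*} {n : ℕ} (X : Fin n → κ → ℝ) (g : κ → ℝ) : Prop :=
  g ∈ RSreg X ∧ ∀ x ∈ RSreg X, (∀ j, x j ≤ g j) → x = g

/-- An interior generator: a generator all of whose coordinates are nonzero. -/
def IsIntGen {κ : Type*} {n : ℕ} (X : Fin n → κ → ℝ) (g : κ → ℝ) : Prop :=
  IsGen X g ∧ ∀ j, 0 < g j

noncomputable def genCount {κ : Type*} {n : ℕ} (X : Fin n → κ → ℝ) : ℕ :=
  Nat.card {g | IsGen X g}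

noncomputable def intGenCount {κ : Type*} {n : ℕ} (X : Fin n → κ → ℝ) : ℕ :=
  Nat.card {g | IsIntGen X g}

section Det
variable {κ : Type*} {n : ℕ}

lemma mem_RSreg_iff {X : Fin n → κ → ℝ} {x : κ → ℝ} :
    x ∈ RSreg X ↔ (∀ j, 0 ≤ x j) ∧ ∀ i, ∃ j, X i j ≤ x j := by
  unfold RSreg
  simp only [Set.mem_setOf_eq, not_forall, not_lt]

lemma RSreg_upclosed {X : Fin n → κ → ℝ} {x y : κ → ℝ} (hx : x ∈ RSreg X)
    (hxy : ∀ j, x j ≤ y j) : y ∈ RSreg X := by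
  rw [mem_RSreg_iff] at hx ⊢
  exact ⟨fun j => (hx.1 j).trans (hxy j), fun i => (hx.2 i).imp fun j h => h.trans (hxy j)⟩

lemma isGen_iff [DecidableEq κ] {X : Fin n → κ → ℝ} {g : κ → ℝ} :
    IsGen X g ↔ g ∈ RSreg X ∧
      ∀ j v, (v = 0 ∨ ∃ i, v = X i j) → v < g j → Function.update g j v ∉ RSreg X := by
  constructor
  · rintro ⟨hmem, hmin⟩
    refine ⟨hmem, fun j v _ hlt hup => ?_⟩
    have hle : ∀ j', Function.update g j v j' ≤ g j' := by
      intro j'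
      rcases eq_or_ne j' j with rfl | hne
      · simpa using hlt.le
      · simp [Function.update_of_ne hne]
    have := hmin _ hup hle
    have : v = g j := by
      have := congrFun this j
      simpa using this
    exact absurd this hlt.ne
  · rintro ⟨hmem, hcrit⟩
    refine ⟨hmem, fun x hx hle => ?_⟩
    by_contra hne
    obtain ⟨j, hj⟩ := Function.ne_iff.mp hne
    have hxj : x j < g j := lt_of_le_of_ne (hle j) hj
    classical
    set T : Finset ℝ := insert 0 ((Finset.univ.image fun i => X i j).filter (· ≤ x j)) with hT
    have h0T : (0:ℝ) ∈ T := Finset.mem_insert_self _ _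
    set v : ℝ := T.max' ⟨0, h0T⟩ with hv
    have hvT : v ∈ T := T.max'_mem _
    have hvcand : v = 0 ∨ ∃ i, v = X i j := by
      rcases Finset.mem_insert.1 hvT with h | h
      · exact Or.inl h
      · obtain ⟨i, -, hi⟩ := Finset.mem_image.1 (Finset.mem_filter.1 h).1
        exact Or.inr ⟨i, hi.symm⟩
    have hvlt : v < g j := by
      rcases Finset.mem_insert.1 hvT with h | h
      · rw [h]; exact lt_of_le_of_lt ((mem_RSreg_iff.1 hx).1 j) hxj
      · exact lt_of_le_of_lt (Finset.mem_filter.1 h).2 hxj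
    refine hcrit j v hvcand hvlt ?_
    rw [mem_RSreg_iff]
    constructor
    · intro j'
      rcases eq_or_ne j' j with rfl | hne
      · simpa using T.le_max' 0 h0T
      · simpa [Function.update_of_ne hne] using (mem_RSreg_iff.1 hmem).1 j'
    · intro i
      obtain ⟨j', hj'⟩ := (mem_RSreg_iff.1 hx).2 i
      rcases eq_or_ne j' j with rfl | hne
      · refine ⟨j', ?_⟩
        simp only [Function.update_self]
        refine T.le_max' _ ?_
        exact Finset.mem_insert_of_mem (Finset.mem_filter.2
          ⟨Finset.mem_image.2 ⟨i, Finset.mem_univ _, rfl⟩, hj'⟩)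
      · exact ⟨j', by simpa [Function.update_of_ne hne] using hj'.trans (hle j')⟩

lemma IsGen.coords [DecidableEq κ] {X : Fin n → κ → ℝ} {g : κ → ℝ} (h : IsGen X g) (j : κ) :
    g j = 0 ∨ ∃ i, g j = X i j := by
  by_contra hc
  push_neg at hc
  obtain ⟨h0, hX⟩ := hc
  have hgj : 0 < g j := lt_of_le_of_ne ((mem_RSreg_iff.1 h.1).1 j) (Ne.symm h0)
  classical
  set T : Finset ℝ := insert 0 ((Finset.univ.image fun i => X i j).filter (· < g j)) with hT
  have h0T : (0:ℝ) ∈ T := Finset.mem_insert_self _ _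
  set v : ℝ := T.max' ⟨0, h0T⟩ with hv
  have hvT : v ∈ T := T.max'_mem _
  have hvcand : v = 0 ∨ ∃ i, v = X i j := by
    rcases Finset.mem_insert.1 hvT with hh | hh
    · exact Or.inl hh
    · obtain ⟨i, -, hi⟩ := Finset.mem_image.1 (Finset.mem_filter.1 hh).1
      exact Or.inr ⟨i, hi.symm⟩
  have hvlt : v < g j := by
    rcases Finset.mem_insert.1 hvT with hh | hh
    · rw [hh]; exact hgj
    · exact (Finset.mem_filter.1 hh).2
  refine (isGen_iff.1 h).2 j v hvcand hvlt ?_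
  rw [mem_RSreg_iff]
  constructor
  · intro j'
    rcases eq_or_ne j' j with rfl | hne
    · simpa using T.le_max' 0 h0T
    · simpa [Function.update_of_ne hne] using (mem_RSreg_iff.1 h.1).1 j'
  · intro i
    obtain ⟨j', hj'⟩ := (mem_RSreg_iff.1 h.1).2 i
    rcases eq_or_ne j' j with rfl | hne
    · refine ⟨j', ?_⟩
      simp only [Function.update_self]
      have hlt : X i j' < g j' := lt_of_le_of_ne hj' fun he => hX i he.symm
      exact T.le_max' _ (Finset.mem_insert_of_mem (Finset.mem_filter.2
        ⟨Finset.mem_image.2 ⟨i, Finset.mem_univ _, rfl⟩, hlt⟩))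
    · exact ⟨j', by simpa [Function.update_of_ne hne] using hj'⟩

lemma isGen_finite [Finite κ] (X : Fin n → κ → ℝ) : {g | IsGen X g}.Finite := by
  classical
  cases nonempty_fintype κ
  have hfin : (Set.pi Set.univ fun j => insert (0:ℝ) (Set.range fun i => X i j)).Finite :=
    Set.Finite.pi fun j => (Set.finite_range _).insert 0
  refine hfin.subset ?_
  intro g hg
  rw [Set.mem_pi]
  intro j _
  rcases (hg : IsGen X g).coords j with h | ⟨i, h⟩
  · exact Or.inl h
  · exact Or.inr ⟨i, h.symm⟩
end Det

section Count
variable {κ : Type*} {n : ℕ}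

/-- canonical choice predicate -/
def canon {κ : Type*} {n : ℕ} (X : Fin n → κ → ℝ) (c : κ → Fin n) : Prop :=
  IsIntGen X (fun j => X (c j) j) ∧ ∀ j i, X i j = X (c j) j → c j ≤ i

lemma canon_bij [DecidableEq κ] (X : Fin n → κ → ℝ) :
    ∃ e : {c : κ → Fin n // canon X c} ≃ {g : κ → ℝ // IsIntGen X g}, True := by
  classical
  have hbij : Function.Bijective
      (fun c : {c : κ → Fin n // canon X c} => (⟨fun j => X (c.1 j) j, c.2.1⟩ :
        {g : κ → ℝ // IsIntGen X g})) := by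
    constructor
    · rintro ⟨c, hc⟩ ⟨c', hc'⟩ h
      simp only [Subtype.mk.injEq] at h
      have h' : ∀ j, X (c j) j = X (c' j) j := fun j => congrFun h j
      refine Subtype.ext (funext fun j => ?_)
      exact le_antisymm (hc.2 j (c' j) (h' j).symm) (hc'.2 j (c j) (h' j))
    · rintro ⟨g, hg⟩
      have hne : ∀ j, (Finset.univ.filter fun i => X i j = g j).Nonempty := by
        intro j
        rcases hg.1.coords j with h0 | ⟨i, hi⟩
        · exact absurd h0 (hg.2 j).ne'
        · exact ⟨i, Finset.mem_filter.2 ⟨Finset.mem_univ _, hi.symm⟩⟩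
      set c : κ → Fin n := fun j => (Finset.univ.filter fun i => X i j = g j).min' (hne j)
        with hcdef
      have hcg : ∀ j, X (c j) j = g j := fun j =>
        (Finset.mem_filter.1 ((Finset.univ.filter fun i => X i j = g j).min'_mem (hne j))).2
      have hgc : (fun j => X (c j) j) = g := funext hcg
      refine ⟨⟨c, ⟨hgc ▸ hg, fun j i hi => ?_⟩⟩, Subtype.ext hgc⟩
      exact Finset.min'_le _ _ (Finset.mem_filter.2 ⟨Finset.mem_univ _, by rw [hi, hcg]⟩)
  exact ⟨Equiv.ofBijective _ hbij, trivial⟩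

lemma intGenCount_eq_card [Fintype κ] [DecidableEq κ] (X : Fin n → κ → ℝ) :
    intGenCount X = Finset.card (@Finset.filter _ (fun c : κ → Fin n => canon X c)
      (Classical.decPred _) Finset.univ) := by
  classical
  obtain ⟨e, -⟩ := canon_bij X
  have h1 : intGenCount X = Nat.card {c : κ → Fin n // canon X c} :=
    (Nat.card_congr e).symm
  rw [h1, Nat.card_eq_fintype_card, Fintype.card_subtype]

lemma isGen_comp_equiv {κ' : Type*} (e : κ' ≃ κ) {X : Fin n → κ → ℝ} {g : κ → ℝ}
    (h : IsGen X g) : IsGen (fun i => X i ∘ e) (g ∘ e) := by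
  have hmem : ∀ x : κ → ℝ, x ∈ RSreg X ↔ x ∘ e ∈ RSreg (fun i => X i ∘ e) := by
    intro x
    rw [mem_RSreg_iff, mem_RSreg_iff]
    constructor
    · rintro ⟨h1, h2⟩
      exact ⟨fun j' => h1 (e j'), fun i => (h2 i).imp' e.symm fun j hj => by
        simpa using hj⟩
    · rintro ⟨h1, h2⟩
      refine ⟨fun j => by simpa using h1 (e.symm j), fun i => ?_⟩
      obtain ⟨j', hj'⟩ := h2 i
      exact ⟨e j', hj'⟩
  refine ⟨(hmem g).1 h.1, fun x' hx' hle' => ?_⟩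
  have hx : x' ∘ e.symm ∈ RSreg X := by
    have : (x' ∘ e.symm) ∘ e = x' := by funext j'; simp
    rw [hmem (x' ∘ e.symm), this]; exact hx'
  have hle : ∀ j, (x' ∘ e.symm) j ≤ g j := by
    intro j
    simpa using hle' (e.symm j)
  have := h.2 _ hx hle
  funext j'
  have := congrFun this (e j')
  simpa using this

lemma intGenCount_comp_equiv {κ' : Type*} (e : κ' ≃ κ) (X : Fin n → κ → ℝ) :
    intGenCount (fun i => X i ∘ e) = intGenCount X := by
  have key : ∀ g : κ → ℝ, IsIntGen X g → IsIntGen (fun i => X i ∘ e) (g ∘ e) := by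
    rintro g ⟨h1, h2⟩
    exact ⟨isGen_comp_equiv e h1, fun j' => h2 (e j')⟩
  have key2 : ∀ g : κ' → ℝ, IsIntGen (fun i => X i ∘ e) g → IsIntGen X (g ∘ e.symm) := by
    rintro g ⟨h1, h2⟩
    have := isGen_comp_equiv e.symm h1
    have hX : (fun i => ((fun i' => X i' ∘ e) i) ∘ e.symm) = X := by
      funext i j; simp
    rw [hX] at this
    exact ⟨this, fun j => by simpa using h2 (e.symm j)⟩
  unfold intGenCount
  exact Nat.card_congr
    { toFun := fun g => ⟨g.1 ∘ e.symm, key2 g.1 g.2⟩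
      invFun := fun g => ⟨g.1 ∘ e, key g.1 g.2⟩
      left_inv := fun g => Subtype.ext (funext fun j => by simp)
      right_inv := fun g => Subtype.ext (funext fun j => by simp) }
end Count

section Supp
variable {n d : ℕ}

/-- extension by zero -/
noncomputable def extz (S : Finset (Fin d)) (h : {j // j ∈ S} → ℝ) : Fin d → ℝ :=
  fun j => if hj : j ∈ S then h ⟨j, hj⟩ else 0

lemma restr_extz (S : Finset (Fin d)) (h : {j // j ∈ S} → ℝ) :
    (fun j : {j // j ∈ S} => extz S h j.1) = h := by
  funext j; simp [extz, j.2]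

lemma mem_RSreg_restrict {X : Fin n → Fin d → ℝ} (hpos : ∀ i j, 0 < X i j)
    (S : Finset (Fin d)) {x : Fin d → ℝ} (hx0 : ∀ j ∉ S, x j = 0) :
    x ∈ RSreg X ↔ (fun j : {j // j ∈ S} => x j.1) ∈
      RSreg (fun i (j : {j // j ∈ S}) => X i j.1) := by
  rw [mem_RSreg_iff, mem_RSreg_iff]
  constructor
  · rintro ⟨h1, h2⟩
    refine ⟨fun j => h1 j.1, fun i => ?_⟩
    obtain ⟨j, hj⟩ := h2 i
    by_cases hjS : j ∈ S
    · exact ⟨⟨j, hjS⟩, hj⟩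
    · rw [hx0 j hjS] at hj
      exact absurd (lt_of_lt_of_le (hpos i j) hj) (lt_irrefl 0)
  · rintro ⟨h1, h2⟩
    refine ⟨fun j => ?_, fun i => ?_⟩
    · by_cases hjS : j ∈ S
      · exact h1 ⟨j, hjS⟩
      · rw [hx0 j hjS]
    · obtain ⟨j, hj⟩ := h2 i
      exact ⟨j.1, hj⟩

lemma genCount_eq_sum {X : Fin n → Fin d → ℝ} (hpos : ∀ i j, 0 < X i j) :
    genCount X = ∑ S : Finset (Fin d),
      intGenCount (fun i (j : {j // j ∈ S}) => X i j.1) := by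
  classical
  have hfin := isGen_finite X
  have h1 : genCount X = hfin.toFinset.card := by
    rw [genCount, Nat.card_coe_set_eq, Set.ncard_eq_toFinset_card _ hfin]
  rw [h1, Finset.card_eq_sum_card_fiberwise
    (f := fun g => Finset.univ.filter fun j => 0 < g j) (t := Finset.univ)
    (fun x _ => Finset.mem_univ _)]
  refine Finset.sum_congr rfl fun S _ => ?_
  -- fiber card = intGenCount of restriction
  have hmemiff : ∀ g, g ∈ (hfin.toFinset.filter fun g =>
      (Finset.univ.filter fun j => 0 < g j) = S) ↔
      (IsGen X g ∧ ∀ j, (0 < g j ↔ j ∈ S)) := by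
    intro g
    rw [Finset.mem_filter, Set.Finite.mem_toFinset]
    constructor
    · rintro ⟨h1, h2⟩
      refine ⟨h1, fun j => ?_⟩
      rw [← h2, Finset.mem_filter]
      simp
    · rintro ⟨h1, h2⟩
      refine ⟨h1, Finset.ext fun j => ?_⟩
      rw [Finset.mem_filter]
      simp [h2 j]
  have hcard : (hfin.toFinset.filter fun g =>
      (Finset.univ.filter fun j => 0 < g j) = S).card =
      Nat.card {g : Fin d → ℝ // IsGen X g ∧ ∀ j, (0 < g j ↔ j ∈ S)} := by
    have h2 : (hfin.toFinset.filter fun g =>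
        (Finset.univ.filter fun j => 0 < g j) = S).card
        = Fintype.card ↥(hfin.toFinset.filter fun g =>
            (Finset.univ.filter fun j => 0 < g j) = S) := (Fintype.card_coe _).symm
    rw [h2, ← Nat.card_eq_fintype_card]
    exact Nat.card_congr (Equiv.subtypeEquivRight hmemiff)
  rw [hcard]
  refine Nat.card_congr ?_
  refine
    { toFun := fun g => ⟨fun j => g.1 j.1, ?_⟩
      invFun := fun h => ⟨extz S h.1, ?_⟩
      left_inv := ?_
      right_inv := ?_ }
  · -- IsIntGen of restriction
    obtain ⟨g, hg, hsupp⟩ := g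
    have hg0 : ∀ j ∉ S, g j = 0 := fun j hj =>
      le_antisymm (not_lt.1 fun hc => hj ((hsupp j).1 hc)) ((mem_RSreg_iff.1 hg.1).1 j)
    refine ⟨⟨(mem_RSreg_restrict hpos S hg0).1 hg.1, fun y hy hle => ?_⟩,
      fun j => (hsupp j.1).2 j.2⟩
    have hy0 : ∀ j ∉ S, extz S y j = 0 := fun j hj => dif_neg hj
    have hye : extz S y ∈ RSreg X := by
      rw [mem_RSreg_restrict hpos S hy0, restr_extz]
      exact hy
    have hyele : ∀ j, extz S y j ≤ g j := by
      intro j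
      by_cases hj : j ∈ S
      · simpa [extz, hj] using hle ⟨j, hj⟩
      · rw [hy0 j hj]; exact (mem_RSreg_iff.1 hg.1).1 j
    have heq := hg.2 _ hye hyele
    calc y = (fun j : {j // j ∈ S} => extz S y j.1) := (restr_extz S y).symm
      _ = fun j : {j // j ∈ S} => g j.1 := by rw [heq]
  · -- IsGen of extension with correct support
    obtain ⟨h, hh⟩ := h
    have hh0 : ∀ j ∉ S, extz S h j = 0 := fun j hj => dif_neg hj
    have hmem : extz S h ∈ RSreg X := by
      rw [mem_RSreg_restrict hpos S hh0, restr_extz]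
      exact hh.1.1
    refine ⟨⟨hmem, fun x hx hle => ?_⟩, fun j => ?_⟩
    · have hx0 : ∀ j ∉ S, x j = 0 := fun j hj =>
        le_antisymm (by rw [← hh0 j hj]; exact hle j) ((mem_RSreg_iff.1 hx).1 j)
      have hrx : (fun j : {j // j ∈ S} => x j.1) ∈
          RSreg (fun i (j : {j // j ∈ S}) => X i j.1) :=
        (mem_RSreg_restrict hpos S hx0).1 hx
      have hrle : ∀ j : {j // j ∈ S}, x j.1 ≤ h j := by
        intro j
        have := hle j.1
        simpa [extz, j.2] using this
      have heq := hh.1.2 _ hrx hrle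
      funext j
      by_cases hj : j ∈ S
      · have := congrFun heq ⟨j, hj⟩
        simpa [extz, hj] using this
      · rw [hx0 j hj, hh0 j hj]
    · by_cases hj : j ∈ S
      · simpa [extz, hj] using (hh.2 ⟨j, hj⟩).trans_le le_rfl
      · simp only [extz, dif_neg hj]
        exact iff_of_false (lt_irrefl 0) hj
  · rintro ⟨g, hg, hsupp⟩
    refine Subtype.ext ?_
    funext j
    by_cases hj : j ∈ S
    · simp [extz, hj]
    · simp only [extz, dif_neg hj]
      exact (le_antisymm (not_lt.1 fun hc => hj ((hsupp j).1 hc))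
        ((mem_RSreg_iff.1 hg.1).1 j)).symm
  · rintro ⟨h, hh⟩
    exact Subtype.ext (restr_extz S h)

end Supp

section Meas
variable {κ : Type*} {n : ℕ} [Fintype κ]

lemma canon_iff [DecidableEq κ] (X : Fin n → κ → ℝ) (c : κ → Fin n) :
    canon X c ↔
      (∀ j, 0 < X (c j) j) ∧
      (∀ i, ∃ j, X i j ≤ X (c j) j) ∧
      (∀ j, ¬ ((∀ j', 0 ≤ Function.update (fun j'' => X (c j'') j'') j (0:ℝ) j') ∧
          ∀ i', ∃ j', X i' j' ≤ Function.update (fun j'' => X (c j'') j'') j (0:ℝ) j')) ∧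
      (∀ j i, ¬ ((X i j < X (c j) j) ∧
          ((∀ j', 0 ≤ Function.update (fun j'' => X (c j'') j'') j (X i j) j') ∧
          ∀ i', ∃ j', X i' j' ≤ Function.update (fun j'' => X (c j'') j'') j (X i j) j'))) ∧
      (∀ j i, ¬ (X i j = X (c j) j ∧ ¬ c j ≤ i)) := by
  constructor
  · rintro ⟨⟨hgen, hpos⟩, hidx⟩
    have hcrit := (isGen_iff.1 hgen).2
    refine ⟨hpos, (mem_RSreg_iff.1 hgen.1).2, fun j hRm => ?_, fun j i hRm => ?_,
      fun j i h => h.2 (hidx j i h.1)⟩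
    · exact hcrit j 0 (Or.inl rfl) (hpos j) (mem_RSreg_iff.2 hRm)
    · exact hcrit j (X i j) (Or.inr ⟨i, rfl⟩) hRm.1 (mem_RSreg_iff.2 hRm.2)
  · rintro ⟨h1, h2, h3, h4, h5⟩
    have hmem : (fun j => X (c j) j) ∈ RSreg X :=
      mem_RSreg_iff.2 ⟨fun j => (h1 j).le, h2⟩
    refine ⟨⟨isGen_iff.2 ⟨hmem, fun j v hv hlt hup => ?_⟩, h1⟩,
      fun j i hij => not_not.1 fun hci => h5 j i ⟨hij, hci⟩⟩
    rcases hv with rfl | ⟨i, rfl⟩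
    · exact h3 j (mem_RSreg_iff.1 hup)
    · exact h4 j i ⟨hlt, mem_RSreg_iff.1 hup⟩

lemma measurableSet_canon [DecidableEq κ] (c : κ → Fin n) :
    MeasurableSet {X : Fin n → κ → ℝ | canon X c} := by
  have hev : ∀ (i : Fin n) (j : κ), Measurable fun X : Fin n → κ → ℝ => X i j :=
    fun i j => (measurable_pi_apply j).comp (measurable_pi_apply i)
  have hupd : ∀ (j j' : κ) (v : (Fin n → κ → ℝ) → ℝ), Measurable v →
      Measurable fun X : Fin n → κ → ℝ =>
        Function.update (fun j'' => X (c j'') j'') j (v X) j' := by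
    intro j j' v hv
    by_cases h : j' = j
    · subst h; simpa [Function.update_self] using hv
    · simpa [Function.update_of_ne h] using hev (c j') j'
  have hRm : ∀ (j : κ) (v : (Fin n → κ → ℝ) → ℝ), Measurable v →
      MeasurableSet {X : Fin n → κ → ℝ |
        (∀ j', 0 ≤ Function.update (fun j'' => X (c j'') j'') j (v X) j') ∧
        ∀ i', ∃ j', X i' j' ≤ Function.update (fun j'' => X (c j'') j'') j (v X) j'} := by
    intro j v hv
    have e1 : {X : Fin n → κ → ℝ |
        (∀ j', 0 ≤ Function.update (fun j'' => X (c j'') j'') j (v X) j') ∧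
        ∀ i', ∃ j', X i' j' ≤ Function.update (fun j'' => X (c j'') j'') j (v X) j'} =
        (⋂ j', {X : Fin n → κ → ℝ |
          0 ≤ Function.update (fun j'' => X (c j'') j'') j (v X) j'}) ∩
        (⋂ i', ⋃ j', {X : Fin n → κ → ℝ |
          X i' j' ≤ Function.update (fun j'' => X (c j'') j'') j (v X) j'}) := by
      ext X
      simp only [Set.mem_setOf_eq, Set.mem_inter_iff, Set.mem_iInter, Set.mem_iUnion]
    rw [e1]
    exact ((MeasurableSet.iInter fun j' =>
        measurableSet_le measurable_const (hupd j j' v hv))).inter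
      (MeasurableSet.iInter fun i' => MeasurableSet.iUnion fun j' =>
        measurableSet_le (hev i' j') (hupd j j' v hv))
  have e : {X : Fin n → κ → ℝ | canon X c} =
      (⋂ j, {X : Fin n → κ → ℝ | 0 < X (c j) j}) ∩
      (⋂ i, ⋃ j, {X : Fin n → κ → ℝ | X i j ≤ X (c j) j}) ∩
      (⋂ j, ({X : Fin n → κ → ℝ |
        (∀ j', 0 ≤ Function.update (fun j'' => X (c j'') j'') j (0:ℝ) j') ∧
        ∀ i', ∃ j', X i' j' ≤ Function.update (fun j'' => X (c j'') j'') j (0:ℝ) j'})ᶜ) ∩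
      (⋂ j, ⋂ i, ({X : Fin n → κ → ℝ | X i j < X (c j) j} ∩
        {X : Fin n → κ → ℝ |
        (∀ j', 0 ≤ Function.update (fun j'' => X (c j'') j'') j (X i j) j') ∧
        ∀ i', ∃ j', X i' j' ≤ Function.update (fun j'' => X (c j'') j'') j (X i j) j'})ᶜ) ∩
      (⋂ j, ⋂ i, ({X : Fin n → κ → ℝ | X i j = X (c j) j} ∩
        {X : Fin n → κ → ℝ | ¬ c j ≤ i})ᶜ) := by
    ext X
    rw [Set.mem_setOf_eq, canon_iff]
    simp only [Set.mem_inter_iff, Set.mem_iInter, Set.mem_iUnion, Set.mem_compl_iff,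
      Set.mem_setOf_eq]
    tauto
  rw [e]
  refine ((((MeasurableSet.iInter fun j =>
      measurableSet_lt measurable_const (hev (c j) j)).inter
    (MeasurableSet.iInter fun i => MeasurableSet.iUnion fun j =>
      measurableSet_le (hev i j) (hev (c j) j))).inter
    (MeasurableSet.iInter fun j => (hRm j _ measurable_const).compl)).inter
    (MeasurableSet.iInter fun j => MeasurableSet.iInter fun i =>
      ((measurableSet_lt (hev i j) (hev (c j) j)).inter (hRm j _ (hev i j))).compl)).inter
    (MeasurableSet.iInter fun j => MeasurableSet.iInter fun i =>
      ((measurableSet_eq_fun (hev i j) (hev (c j) j)).inter ?_).compl)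
  by_cases h : c j ≤ i
  · simpa [h] using (MeasurableSet.empty)
  · simpa [h] using (MeasurableSet.univ)

lemma measurable_intGenCount :
    Measurable fun X : Fin n → κ → ℝ => intGenCount X := by
  classical
  have h : (fun X : Fin n → κ → ℝ => intGenCount X) =
      fun X => ∑ c : κ → Fin n, if canon X c then 1 else 0 := by
    funext X
    rw [intGenCount_eq_card, Finset.card_filter]
  rw [h]
  exact Finset.measurable_sum _ fun c _ =>
    Measurable.ite (measurableSet_canon c) measurable_const measurable_const

lemma measurable_intGenCount_real :
    Measurable fun X : Fin n → κ → ℝ => (intGenCount X : ℝ) :=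
  Measurable.comp measurable_from_top measurable_intGenCount

lemma intGenCount_le [DecidableEq κ] (X : Fin n → κ → ℝ) :
    intGenCount X ≤ Fintype.card (κ → Fin n) := by
  classical
  rw [intGenCount_eq_card]
  exact (Finset.card_filter_le _ _).trans (by simp)

end Meas

section Prob
variable {Ω : Type*} [MeasurableSpace Ω] {μ : Measure Ω} [IsProbabilityMeasure μ]

lemma joint_law {ι : Type*} [Fintype ι] {β : Type*} [MeasurableSpace β]
    (f : ι → Ω → β) (hf : ∀ i, Measurable (f i))
    (hi : iIndepFun f μ) :
    μ.map (fun ω i => f i ω) = Measure.pi (fun i => μ.map (f i)) := by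
  haveI : ∀ i, IsProbabilityMeasure (μ.map (f i)) :=
    fun i => Measure.isProbabilityMeasure_map (hf i).aemeasurable
  refine (Measure.pi_eq fun s hs => ?_).symm
  rw [Measure.map_apply (measurable_pi_lambda _ hf) (MeasurableSet.univ_pi hs)]
  have hpre : (fun ω i => f i ω) ⁻¹' (Set.pi Set.univ s) = ⋂ i ∈ Finset.univ, f i ⁻¹' s i := by
    ext ω
    simp [Set.mem_pi]
  rw [hpre, hi.measure_inter_preimage_eq_mul Finset.univ (fun i _ => hs i)]
  exact Finset.prod_congr rfl fun i _ =>
    (Measure.map_apply (hf i) (hs i)).symm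

lemma pi_map_comp {k d : ℕ} (emb : Fin k → Fin d) (hinj : Function.Injective emb)
    (ν : Measure ℝ) [IsProbabilityMeasure ν] :
    (Measure.pi fun _ : Fin d => ν).map (fun (x : Fin d → ℝ) (m : Fin k) => x (emb m)) =
      Measure.pi (fun _ : Fin k => ν) := by
  classical
  refine (Measure.pi_eq fun s hs => ?_).symm
  have hmeas : Measurable fun (x : Fin d → ℝ) (m : Fin k) => x (emb m) :=
    measurable_pi_lambda _ fun m => measurable_pi_apply (emb m)
  rw [Measure.map_apply hmeas (MeasurableSet.univ_pi hs)]
  set t : Fin d → Set ℝ := fun j => if h : ∃ m, emb m = j then s h.choose else Set.univ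
    with ht
  have hte : ∀ m, t (emb m) = s m := by
    intro m
    have h : ∃ m', emb m' = emb m := ⟨m, rfl⟩
    have : h.choose = m := hinj h.choose_spec
    simp [ht, dif_pos h, this]
  have hpre : (fun (x : Fin d → ℝ) (m : Fin k) => x (emb m)) ⁻¹' (Set.pi Set.univ s) =
      Set.pi Set.univ t := by
    ext x
    simp only [Set.mem_preimage, Set.mem_pi, Set.mem_univ, forall_true_left, true_implies]
    constructor
    · intro h j
      by_cases hj : ∃ m, emb m = j
      · rw [ht]
        simp only [dif_pos hj]
        have := h hj.choose
        rwa [hj.choose_spec] at this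
      · simp [ht, dif_neg hj]
    · intro h m
      have := h (emb m)
      rwa [hte m] at this
  rw [hpre, Measure.pi_pi]
  have h1 : ∏ j : Fin d, ν (t j) = ∏ j ∈ Finset.univ.image emb, ν (t j) := by
    refine (Finset.prod_subset (Finset.subset_univ _) fun j _ hj => ?_).symm
    have hne : ¬ ∃ m, emb m = j := by
      rintro ⟨m, hm⟩
      exact hj (Finset.mem_image.2 ⟨m, Finset.mem_univ _, hm⟩)
    simp [ht, dif_neg hne]
  rw [h1, Finset.prod_image (fun m _ m' _ h => hinj h)]
  exact Finset.prod_congr rfl fun m _ => by rw [hte m]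

lemma expMeasure_pos : expMeasure 1 {x : ℝ | 0 < x} = 1 := by
  have h0 : expMeasure 1 {x : ℝ | ¬ 0 < x} = 0 := by
    have hsub : {x : ℝ | ¬ 0 < x} = Set.Iio 0 ∪ {0} := by
      ext x
      simp only [Set.mem_setOf_eq, not_lt, Set.mem_union, Set.mem_Iio, Set.mem_singleton_iff]
      constructor
      · intro h; exact h.lt_or_eq
      · rintro (h | rfl)
        · exact h.le
        · exact le_rfl
    rw [hsub]
    refine le_antisymm ?_ (zero_le)
    refine (measure_union_le _ _).trans ?_
    have h1 : expMeasure 1 (Set.Iio 0) = 0 := by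
      rw [expMeasure, gammaMeasure, withDensity_apply _ measurableSet_Iio]
      exact lintegral_gammaPDF_of_nonpos le_rfl
    have h2 : expMeasure 1 ({0} : Set ℝ) = 0 := by
      rw [expMeasure, gammaMeasure, withDensity_apply _ (measurableSet_singleton 0)]
      simp [lintegral_singleton]
    simp [h1, h2]
  haveI : IsProbabilityMeasure (expMeasure 1) := isProbabilityMeasure_expMeasure one_pos
  have := measure_add_measure_compl (μ := expMeasure 1) (s := {x : ℝ | 0 < x})
    (measurableSet_lt measurable_const measurable_id)
  rw [show {x : ℝ | 0 < x}ᶜ = {x : ℝ | ¬ 0 < x} from rfl, h0, add_zero] at this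
  simpa using this

end Prob

section Main
variable {Ω : Type*} [MeasurableSpace Ω] {μ : Measure Ω} [IsProbabilityMeasure μ]

lemma integrable_intGenCount' {κ : Type*} [Fintype κ] {n : ℕ} {T : Ω → Fin n → κ → ℝ}
    (hT : Measurable T) : Integrable (fun ω => (intGenCount (T ω) : ℝ)) μ := by
  classical
  refine (integrable_const ((Fintype.card (κ → Fin n) : ℝ))).mono'
    (measurable_intGenCount_real.comp hT).aestronglyMeasurable ?_
  refine Filter.Eventually.of_forall fun ω => ?_
  rw [Real.norm_eq_abs, abs_of_nonneg (by positivity)]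
  exact_mod_cast intGenCount_le (T ω)

lemma integral_intGenCount_comp {n k : ℕ} {W V : Fin n → Ω → Fin k → ℝ}
    (hW : Measurable fun ω i => W i ω) (hV : Measurable fun ω i => V i ω)
    (hlaw : μ.map (fun ω i => W i ω) = μ.map (fun ω i => V i ω)) :
    ∫ ω, (intGenCount (fun i => W i ω) : ℝ) ∂μ =
      ∫ ω, (intGenCount (fun i => V i ω) : ℝ) ∂μ := by
  have h1 := integral_map (μ := μ) (φ := fun ω i => W i ω)
    (f := fun X : Fin n → Fin k → ℝ => (intGenCount X : ℝ))
    hW.aemeasurable measurable_intGenCount_real.aestronglyMeasurable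
  have h2 := integral_map (μ := μ) (φ := fun ω i => V i ω)
    (f := fun X : Fin n → Fin k → ℝ => (intGenCount X : ℝ))
    hV.aemeasurable measurable_intGenCount_real.aestronglyMeasurable
  rw [← h1, ← h2, hlaw]

theorem stmt8' (d n : ℕ)
    (Y : (k : ℕ) → Fin n → Ω → Fin k → ℝ)
    (hmeas : ∀ k ≤ d, ∀ i, Measurable (Y k i))
    (hindep : ∀ k ≤ d, iIndepFun (Y k) μ)
    (hlaw : ∀ k ≤ d, ∀ i, μ.map (Y k i) = Measure.pi fun _ : Fin k => expMeasure 1) :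
    ∫ ω, (genCount (fun i => Y d i ω) : ℝ) ∂μ =
      ∑ k ∈ Finset.range (d + 1),
        (d.choose k : ℝ) * ∫ ω, (intGenCount (fun i => Y k i ω) : ℝ) ∂μ := by
  classical
  haveI : IsProbabilityMeasure (expMeasure 1) := isProbabilityMeasure_expMeasure one_pos
  -- a.e. positivity of all coordinates
  have hae : ∀ᵐ ω ∂μ, ∀ i j, 0 < Y d i ω j := by
    rw [ae_all_iff]
    intro i
    have hA : {f : Fin d → ℝ | ∀ j, 0 < f j} = Set.pi Set.univ (fun _ => Set.Ioi 0) := by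
      ext f
      simp [Set.mem_pi]
    have hAm : MeasurableSet {f : Fin d → ℝ | ∀ j, 0 < f j} := by
      rw [hA]
      exact MeasurableSet.univ_pi fun _ => measurableSet_Ioi
    have h1 : μ ((Y d i) ⁻¹' {f | ∀ j, 0 < f j}) = 1 := by
      rw [← Measure.map_apply (hmeas d le_rfl i) hAm, hlaw d le_rfl i, hA, Measure.pi_pi]
      have : expMeasure 1 (Set.Ioi (0:ℝ)) = 1 := expMeasure_pos
      simp [this]
    have h0 : μ ((Y d i) ⁻¹' {f | ∀ j, 0 < f j})ᶜ = 0 :=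
      (prob_compl_eq_zero_iff ((hmeas d le_rfl i) hAm)).2 h1
    rw [ae_iff]
    convert h0 using 2
    rfl
  -- step 1: pointwise decomposition over supports, a.e.
  have hstep1 : ∫ ω, (genCount (fun i => Y d i ω) : ℝ) ∂μ =
      ∫ ω, ∑ S : Finset (Fin d),
        (intGenCount (fun i (j : {j // j ∈ S}) => Y d i ω j.1) : ℝ) ∂μ := by
    refine integral_congr_ae (hae.mono fun ω hω => ?_)
    dsimp only
    rw [genCount_eq_sum fun i j => hω i j]
    push_cast
    rfl
  -- measurability of restricted tuples
  have hTmeas : ∀ S : Finset (Fin d),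
      Measurable fun ω (i : Fin n) (j : {j // j ∈ S}) => Y d i ω j.1 := by
    intro S
    exact measurable_pi_lambda _ fun i => measurable_pi_lambda _ fun j =>
      (measurable_pi_apply j.1).comp (hmeas d le_rfl i)
  rw [hstep1, integral_finset_sum _ fun S _ => integrable_intGenCount' (hTmeas S)]
  -- step 2: each restricted integral equals the Fin (S.card) integral
  have hstep2 : ∀ S : Finset (Fin d),
      ∫ ω, (intGenCount (fun i (j : {j // j ∈ S}) => Y d i ω j.1) : ℝ) ∂μ =
      ∫ ω, (intGenCount (fun i => Y S.card i ω) : ℝ) ∂μ := by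
    intro S
    have hk : S.card ≤ d := by
      simpa using S.card_le_univ
    set e := S.orderIsoOfFin rfl with he
    set emb : Fin S.card → Fin d := fun m => (e m).1 with hemb
    have hinj : Function.Injective emb := fun m m' h =>
      e.injective (Subtype.ext h)
    have hφ : Measurable fun (x : Fin d → ℝ) (m : Fin S.card) => x (emb m) :=
      measurable_pi_lambda _ fun m => measurable_pi_apply (emb m)
    -- rewrite integrand via the equiv
    have hre : ∀ ω, (intGenCount (fun i (j : {j // j ∈ S}) => Y d i ω j.1) : ℝ) =
        (intGenCount (fun i (m : Fin S.card) => Y d i ω (emb m)) : ℝ) := by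
      intro ω
      rw [← intGenCount_comp_equiv e.toEquiv (fun i (j : {j // j ∈ S}) => Y d i ω j.1)]
      rfl
    simp only [hre]
    -- now compare laws
    set W : Fin n → Ω → Fin S.card → ℝ := fun i ω m => Y d i ω (emb m) with hW
    have hWmeas : ∀ i, Measurable (W i) := fun i => hφ.comp (hmeas d le_rfl i)
    have hWindep : iIndepFun W μ :=
      (hindep d le_rfl).comp (fun _ x m => x (emb m)) fun _ => hφ
    have hWlaw : ∀ i, μ.map (W i) = Measure.pi fun _ : Fin S.card => expMeasure 1 := by
      intro i
      have : W i = (fun (x : Fin d → ℝ) (m : Fin S.card) => x (emb m)) ∘ (Y d i) := rfl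
      rw [this, ← Measure.map_map hφ (hmeas d le_rfl i), hlaw d le_rfl i,
        pi_map_comp emb hinj]
    have hjointW : μ.map (fun ω i => W i ω) =
        Measure.pi (fun _ : Fin n => Measure.pi fun _ : Fin S.card => expMeasure 1) := by
      rw [joint_law W hWmeas hWindep]
      exact congrArg Measure.pi (funext hWlaw)
    have hjointV : μ.map (fun ω i => Y S.card i ω) =
        Measure.pi (fun _ : Fin n => Measure.pi fun _ : Fin S.card => expMeasure 1) := by
      rw [joint_law (Y S.card) (hmeas S.card hk) (hindep S.card hk)]
      exact congrArg Measure.pi (funext (hlaw S.card hk))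
    exact integral_intGenCount_comp
      (measurable_pi_lambda _ fun i => hWmeas i)
      (measurable_pi_lambda _ fun i => hmeas S.card hk i)
      (hjointW.trans hjointV.symm)
  simp only [hstep2]
  -- step 3: regroup by cardinality
  have hmaps : ∀ S : Finset (Fin d), S ∈ Finset.univ → S.card ∈ Finset.range (d + 1) := by
    intro S _
    rw [Finset.mem_range, Nat.lt_succ_iff]
    simpa using S.card_le_univ
  rw [← Finset.sum_fiberwise_of_maps_to hmaps
    (fun S => ∫ ω, (intGenCount (fun i => Y S.card i ω) : ℝ) ∂μ)]
  refine Finset.sum_congr rfl fun k hk => ?_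
  have hinner : ∀ S ∈ Finset.univ.filter fun S : Finset (Fin d) => S.card = k,
      (∫ ω, (intGenCount (fun i => Y S.card i ω) : ℝ) ∂μ) =
      ∫ ω, (intGenCount (fun i => Y k i ω) : ℝ) ∂μ := by
    intro S hS
    rw [(Finset.mem_filter.1 hS).2]
  rw [Finset.sum_congr rfl hinner, Finset.sum_const]
  have hcard : (Finset.univ.filter fun S : Finset (Fin d) => S.card = k).card =
      d.choose k := by
    have := Finset.univ_filter_card_eq (Fin d) k
    rw [show (Finset.filter (fun S : Finset (Fin d) => S.card = k) Finset.univ) =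
      ({S : Finset (Fin d) | S.card = k} : Finset _) from rfl, this,
      Finset.card_powersetCard, Finset.card_univ, Fintype.card_fin]
  rw [hcard, nsmul_eq_mul]

end Main

/-- `E γ_{d,n} = ∑_{k=0}^d C(d,k) E ι_{k,n}`, where for each dimension `k ≤ d` the
observations `Y k` are i.i.d. with `k` independent Exponential(1) coordinates. -/
theorem stmt8 {Ω : Type*} [MeasurableSpace Ω] (μ : Measure Ω) [IsProbabilityMeasure μ]
    (d n : ℕ)
    (Y : (k : ℕ) → Fin n → Ω → Fin k → ℝ)
    (hmeas : ∀ k ≤ d, ∀ i, Measurable (Y k i))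
    (hindep : ∀ k ≤ d, iIndepFun (Y k) μ)
    (hlaw : ∀ k ≤ d, ∀ i, μ.map (Y k i) = Measure.pi fun _ : Fin k => expMeasure 1) :
    ∫ ω, (genCount (fun i => Y d i ω) : ℝ) ∂μ =
      ∑ k ∈ Finset.range (d + 1),
        (d.choose k : ℝ) * ∫ ω, (intGenCount (fun i => Y k i ω) : ℝ) ∂μ :=
  stmt8' d n Y hmeas hindep hlaw
end

section
/- In dimension d = 2, for every n ≥ 0, E γ_{2,n} = H_n + 1 = E ρ_{2,n} + 1, where H_n is the n-th harmonic number; indeed γ_{2,n} = ρ_{2,n} + 1 deterministically (almost surely). -/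
open MeasureTheory ProbabilityTheory Set
local notation "E1" => ProbabilityTheory.expMeasure 1
local notation "MU0" => MeasureTheory.Measure.pi fun _ : Fin 2 => ProbabilityTheory.expMeasure 1

/-- Number of remaining Pareto records. -/
noncomputable def recCount {κ : Type*} {n : ℕ} (X : Fin n → κ → ℝ) : ℕ :=
  Nat.card {i : Fin n | ∀ k, ¬ ∀ j, X i j < X k j}


section Comb
variable {n : ℕ} (p : Fin n → Fin 2 → ℝ)

noncomputable def fmax (t : ℝ) : ℝ :=
  Finset.univ.fold max 0 (fun i => if t < p i 0 then p i 1 else 0)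

lemma fmax_le_iff {t c : ℝ} : fmax p t ≤ c ↔ 0 ≤ c ∧ ∀ i, t < p i 0 → p i 1 ≤ c := by
  rw [fmax, Finset.fold_max_le]
  constructor
  · rintro ⟨h0, h⟩
    exact ⟨h0, fun i hi => by simpa [hi] using h i (Finset.mem_univ i)⟩
  · rintro ⟨h0, h⟩
    refine ⟨h0, fun i _ => ?_⟩
    split_ifs with hi
    · exact h i hi
    · exact h0

lemma fmax_lt_iff {t c : ℝ} : fmax p t < c ↔ 0 < c ∧ ∀ i, t < p i 0 → p i 1 < c := by
  rw [fmax, Finset.fold_max_lt]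
  constructor
  · rintro ⟨h0, h⟩
    exact ⟨h0, fun i hi => by simpa [hi] using h i (Finset.mem_univ i)⟩
  · rintro ⟨h0, h⟩
    refine ⟨h0, fun i _ => ?_⟩
    split_ifs with hi
    · exact h i hi
    · exact h0

lemma fmax_nonneg (t : ℝ) : 0 ≤ fmax p t := by
  by_contra h
  push_neg at h
  exact absurd ((fmax_le_iff p).1 le_rfl).1 (by linarith)

lemma le_fmax {t : ℝ} {i : Fin n} (hi : t < p i 0) : p i 1 ≤ fmax p t := by
  by_contra h
  push_neg at h
  exact absurd (((fmax_le_iff p).1 le_rfl).2 i hi) (by linarith)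

lemma fmax_anti {s t : ℝ} (h : s ≤ t) : fmax p t ≤ fmax p s := by
  rw [fmax_le_iff]
  exact ⟨fmax_nonneg p s, fun i hi => le_fmax p (lt_of_le_of_lt h hi)⟩

lemma forall_fin_two' {P : Fin 2 → Prop} : (∀ j, P j) ↔ P 0 ∧ P 1 := by
  constructor
  · exact fun h => ⟨h 0, h 1⟩
  · rintro ⟨h0, h1⟩ j
    fin_cases j <;> assumption

lemma fin2_ext {x y : Fin 2 → ℝ} (h0 : x 0 = y 0) (h1 : x 1 = y 1) : x = y := by
  funext j; fin_cases j <;> assumption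

lemma mem_RS_iff {x : Fin 2 → ℝ} :
    x ∈ RSreg p ↔ (0 ≤ x 0 ∧ 0 ≤ x 1) ∧ fmax p (x 0) ≤ x 1 := by
  rw [RSreg, Set.mem_setOf_eq, fmax_le_iff]
  simp only [forall_fin_two' (P := fun j => 0 ≤ x j), forall_fin_two' (P := fun j => x j < p _ j)]
  constructor
  · rintro ⟨⟨h0, h1⟩, h⟩
    exact ⟨⟨h0, h1⟩, h1, fun i hi => not_lt.1 fun hl => h i ⟨hi, hl⟩⟩
  · rintro ⟨⟨h0, h1⟩, _, h⟩
    exact ⟨⟨h0, h1⟩, fun i ⟨hi, hl⟩ => absurd (h i hi) (not_le.2 hl)⟩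

def isRec (i : Fin n) : Prop := ∀ k, ¬ ∀ j, p i j < p k j

noncomputable def Fgen (i : Fin n) : Fin 2 → ℝ := ![p i 0, fmax p (p i 0)]

noncomputable def g0 : Fin 2 → ℝ := ![0, fmax p 0]

variable {p}

lemma corner_mem (t : ℝ) (ht : 0 ≤ t) : (![t, fmax p t] : Fin 2 → ℝ) ∈ RSreg p := by
  rw [mem_RS_iff]
  simp [ht, fmax_nonneg p t]

lemma gen_eq_corner {g : Fin 2 → ℝ} (hg : IsGen p g) : g = ![g 0, fmax p (g 0)] := by
  obtain ⟨hmem, hmin⟩ := hg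
  rw [mem_RS_iff] at hmem
  obtain ⟨⟨h00, h01⟩, hf⟩ := hmem
  refine (hmin _ (corner_mem _ h00) ?_).symm
  intro j
  fin_cases j <;> simp [hf]

lemma g0_gen : IsGen p (g0 p) := by
  constructor
  · exact corner_mem 0 le_rfl
  · intro x hx hle
    rw [mem_RS_iff] at hx
    obtain ⟨⟨h00, h01⟩, hf⟩ := hx
    have h0 : x 0 = 0 := le_antisymm (by simpa [g0] using hle 0) h00
    have h1 : x 1 = fmax p 0 := by
      have := hle 1
      simp only [g0] at this ⊢
      have : fmax p (x 0) ≤ x 1 := hf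
      rw [h0] at this
      have h2 := hle 1
      simp only [g0, Matrix.cons_val_one, Matrix.head_cons, Matrix.cons_val_zero] at h2
      linarith
    refine fin2_ext ?_ ?_ <;> simp [g0, h0, h1]

lemma rec_fmax_lt {i : Fin n} (hpos : ∀ i j, 0 < p i j)
    (h1 : ∀ i k, i ≠ k → p i 1 ≠ p k 1) (hi : isRec p i) :
    fmax p (p i 0) < p i 1 := by
  rw [fmax_lt_iff]
  refine ⟨hpos i 1, fun k hk => ?_⟩
  have hki : i ≠ k := fun h => absurd hk (by rw [h]; exact lt_irrefl _)
  have hle : p k 1 ≤ p i 1 := by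
    have := hi k
    rw [forall_fin_two'] at this
    push_neg at this
    exact this hk
  exact lt_of_le_of_ne hle fun h => (h1 i k hki) h.symm

lemma Fgen_gen {i : Fin n} (hpos : ∀ i j, 0 < p i j)
    (h1 : ∀ i k, i ≠ k → p i 1 ≠ p k 1) (hi : isRec p i) : IsGen p (Fgen p i) := by
  constructor
  · exact corner_mem _ (hpos i 0).le
  · intro x hx hle
    rw [mem_RS_iff] at hx
    obtain ⟨⟨h00, h01⟩, hf⟩ := hx
    have hle0 : x 0 ≤ p i 0 := by simpa [Fgen] using hle 0
    have hle1 : x 1 ≤ fmax p (p i 0) := by simpa [Fgen] using hle 1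
    have h0 : x 0 = p i 0 := by
      rcases lt_or_eq_of_le hle0 with h | h
      · exfalso
        have : p i 1 ≤ fmax p (x 0) := le_fmax p h
        have h2 := rec_fmax_lt hpos h1 hi
        linarith
      · exact h
    have h1' : x 1 = fmax p (p i 0) := by
      rw [h0] at hf; linarith
    refine fin2_ext ?_ ?_ <;> simp [Fgen, h0, h1']

lemma gen_set_eq (hpos : ∀ i j, 0 < p i j)
    (h1 : ∀ i k, i ≠ k → p i 1 ≠ p k 1) :
    {g | IsGen p g} = insert (g0 p) (Fgen p '' {i | isRec p i}) := by
  ext g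
  simp only [Set.mem_setOf_eq, Set.mem_insert_iff, Set.mem_image]
  constructor
  · intro hg
    have hcor := gen_eq_corner hg
    obtain ⟨hmem, hmin⟩ := hg
    rw [mem_RS_iff] at hmem
    obtain ⟨⟨h00, h01⟩, hf⟩ := hmem
    have hg1 : g 1 = fmax p (g 0) := by
      conv_lhs => rw [hcor]
      simp
    rcases eq_or_lt_of_le h00 with h0eq | h0pos
    · left
      rw [hcor, g0, ← h0eq]
    · right
      -- key claim
      have key : ∀ t, 0 ≤ t → t < g 0 → ∃ i, t < p i 0 ∧ g 1 < p i 1 := by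
        intro t ht htl
        by_contra hcon
        push_neg at hcon
        have hmem : (![t, g 1] : Fin 2 → ℝ) ∈ RSreg p := by
          rw [mem_RS_iff]
          refine ⟨⟨by simpa using ht, by simpa using h01⟩, ?_⟩
          simp only [Matrix.cons_val_zero, Matrix.cons_val_one, Matrix.head_cons]
          exact (fmax_le_iff p).2 ⟨h01, hcon⟩
        have := hmin _ hmem (by intro j; fin_cases j <;> simp [htl.le])
        have : t = g 0 := by
          have := congrFun this 0
          simpa using this
        linarith
      obtain ⟨iw, hiw⟩ := key (g 0 / 2) (by linarith) (by linarith)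
      classical
      set S : Finset (Fin n) := Finset.univ.filter (fun i => g 1 < p i 1) with hS
      have hSne : S.Nonempty := ⟨iw, by simp [hS, hiw.2]⟩
      obtain ⟨i₀, hi₀S, hi₀max⟩ := S.exists_max_image (fun i => p i 0) hSne
      have hi₀1 : g 1 < p i₀ 1 := by simpa [hS] using hi₀S
      have hx0 : p i₀ 0 = g 0 := by
        rcases lt_trichotomy (p i₀ 0) (g 0) with h | h | h
        · exfalso
          obtain ⟨i', hi'0, hi'1⟩ := key (p i₀ 0) (hpos i₀ 0).le h
          have : i' ∈ S := by simp [hS, hi'1]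
          have := hi₀max i' this
          linarith
        · exact h
        · exfalso
          have : p i₀ 1 ≤ fmax p (g 0) := le_fmax p h
          rw [← hg1] at this
          linarith
      have hrec : isRec p i₀ := by
        intro k hk
        rw [forall_fin_two'] at hk
        obtain ⟨hk0, hk1⟩ := hk
        rw [hx0] at hk0
        have : p k 1 ≤ fmax p (g 0) := le_fmax p hk0
        rw [← hg1] at this
        linarith
      exact ⟨i₀, hrec, by rw [Fgen, hx0]; exact hcor.symm⟩
  · rintro (rfl | ⟨i, hi, rfl⟩)
    · exact g0_gen
    · exact Fgen_gen hpos h1 hi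

theorem genCount_eq_recCount_add_one (hpos : ∀ i j, 0 < p i j)
    (h0 : ∀ i k, i ≠ k → p i 0 ≠ p k 0)
    (h1 : ∀ i k, i ≠ k → p i 1 ≠ p k 1) :
    genCount p = recCount p + 1 := by
  classical
  have hset := gen_set_eq hpos h1
  have hR : {i : Fin n | ∀ k, ¬ ∀ j, p i j < p k j} = {i | isRec p i} := rfl
  rw [genCount, recCount, hR, hset]
  rw [Nat.card_coe_set_eq, Nat.card_coe_set_eq]
  have hfin : (Fgen p '' {i | isRec p i}).Finite := (Set.toFinite _).image _
  have hnotmem : g0 p ∉ Fgen p '' {i | isRec p i} := by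
    rintro ⟨i, _, hFi⟩
    have h := congrFun hFi 0
    simp only [Fgen, g0, Matrix.cons_val_zero] at h
    exact absurd h (ne_of_gt (hpos i 0))
  have hinj : Set.InjOn (Fgen p) {i | isRec p i} := by
    intro i _ k _ hik
    by_contra hne
    exact h0 i k hne (by simpa [Fgen] using congrFun hik 0)
  rw [Set.ncard_insert_of_notMem hnotmem hfin, Set.ncard_image_of_injOn hinj]

end Comb
open MeasureTheory ProbabilityTheory Set Filter Real

lemma expderiv (c : ℝ) (b : ℝ) :
    HasDerivAt (fun x : ℝ => 1 - c * Real.exp (-x)) (c * Real.exp (-b)) b := by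
  have h1 : HasDerivAt (fun x : ℝ => Real.exp (-x)) (-Real.exp (-b)) b := by
    simpa using (hasDerivAt_neg b).exp
  have := (h1.const_mul c).const_sub 1
  exact this.congr_deriv (by ring)

lemma exp_neg_le_one {b : ℝ} (hb : 0 ≤ b) : Real.exp (-b) ≤ 1 :=
  Real.exp_le_one_iff.2 (by linarith)

lemma intA (c : ℝ) (hc0 : 0 < c) (hc1 : c ≤ 1) (m : ℕ) :
    IntegrableOn (fun b => Real.exp (-b) * (1 - c * Real.exp (-b))^m) (Set.Ioi (0:ℝ)) ∧
    ∫ b in Set.Ioi (0:ℝ), Real.exp (-b) * (1 - c * Real.exp (-b))^m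
      = (1 - (1-c)^(m+1)) / ((m+1) * c) := by
  set G : ℝ → ℝ := fun b => (1 - c * Real.exp (-b))^(m+1) / ((m+1) * c) with hG
  have hm1 : ((m:ℝ)+1) ≠ 0 := by positivity
  have hderiv : ∀ b : ℝ, HasDerivAt G (Real.exp (-b) * (1 - c * Real.exp (-b))^m) b := by
    intro b
    have h3 := ((expderiv c b).pow (m+1)).div_const (((m:ℝ)+1) * c)
    refine h3.congr_deriv ?_
    push_cast
    field_simp
  have hlim : Tendsto G atTop (nhds (1 / (((m:ℝ)+1)*c))) := by
    have h0 : Tendsto (fun b : ℝ => Real.exp (-b)) atTop (nhds 0) :=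
      Real.tendsto_exp_neg_atTop_nhds_zero
    have : Tendsto (fun b : ℝ => (1 - c * Real.exp (-b))^(m+1)) atTop (nhds ((1 - c*0)^(m+1))) :=
      ((tendsto_const_nhds.sub (h0.const_mul c)).pow (m+1))
    simpa using this.div_const (((m:ℝ)+1) * c)
  have hnonneg : ∀ b ∈ Set.Ioi (0:ℝ), 0 ≤ Real.exp (-b) * (1 - c * Real.exp (-b))^m := by
    intro b hb
    have : c * Real.exp (-b) ≤ 1 := by
      calc c * Real.exp (-b) ≤ 1 * 1 :=
        mul_le_mul hc1 (exp_neg_le_one (le_of_lt hb)) (Real.exp_pos _).le zero_le_one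
      _ = 1 := by ring
    exact mul_nonneg (Real.exp_pos _).le (pow_nonneg (by linarith) m)
  have hcont : ContinuousWithinAt G (Set.Ici 0) 0 := (hderiv 0).continuousAt.continuousWithinAt
  have hder' : ∀ b ∈ Set.Ioi (0:ℝ), HasDerivAt G (Real.exp (-b) * (1 - c * Real.exp (-b))^m) b :=
    fun b _ => hderiv b
  refine ⟨integrableOn_Ioi_deriv_of_nonneg hcont hder' hnonneg hlim, ?_⟩
  rw [integral_Ioi_of_hasDerivAt_of_nonneg hcont hder' hnonneg hlim, hG]
  simp only [neg_zero, Real.exp_zero, mul_one]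
  ring

lemma intB (n : ℕ) :
    IntegrableOn (fun a => 1 - (1 - Real.exp (-a))^n) (Set.Ioi (0:ℝ)) ∧
    ∫ a in Set.Ioi (0:ℝ), (1 - (1 - Real.exp (-a))^n) = ∑ k ∈ Finset.range n, 1/((k:ℝ)+1) := by
  set G : ℝ → ℝ := fun a => ∑ k ∈ Finset.range n, (1 - Real.exp (-a))^(k+1) / ((k:ℝ)+1) with hG
  have hderiv : ∀ a : ℝ, HasDerivAt G (1 - (1 - Real.exp (-a))^n) a := by
    intro a
    have hterm : ∀ k ∈ Finset.range n, HasDerivAt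
        (fun x => (1 - Real.exp (-x))^(k+1) / ((k:ℝ)+1))
        ((1 - Real.exp (-a))^k * Real.exp (-a)) a := by
      intro k _
      have hk1 : ((k:ℝ)+1) ≠ 0 := by positivity
      have h3 := ((expderiv 1 a).pow (k+1)).div_const ((k:ℝ)+1)
      simp only [one_mul] at h3
      refine h3.congr_deriv ?_
      push_cast
      field_simp
    have := HasDerivAt.fun_sum hterm
    refine this.congr_deriv ?_
    have hx : (1 - Real.exp (-a)) ≠ 1 := by
      have := Real.exp_pos (-a); intro h; rw [sub_eq_self] at h; linarith
    rw [← Finset.sum_mul, geom_sum_eq hx]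
    have he : Real.exp (-a) ≠ 0 := (Real.exp_pos _).ne'
    field_simp
    ring
  have hlim : Tendsto G atTop (nhds (∑ k ∈ Finset.range n, 1/((k:ℝ)+1))) := by
    apply tendsto_finset_sum
    intro k _
    have h0 : Tendsto (fun a : ℝ => Real.exp (-a)) atTop (nhds 0) :=
      Real.tendsto_exp_neg_atTop_nhds_zero
    have : Tendsto (fun a : ℝ => (1 - Real.exp (-a))^(k+1)) atTop (nhds ((1 - 0)^(k+1))) :=
      (tendsto_const_nhds.sub h0).pow (k+1)
    simpa using this.div_const ((k:ℝ)+1)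
  have hnonneg : ∀ a ∈ Set.Ioi (0:ℝ), 0 ≤ 1 - (1 - Real.exp (-a))^n := by
    intro a ha
    have h1 : 0 ≤ 1 - Real.exp (-a) := by
      have := exp_neg_le_one (le_of_lt ha); linarith
    have h2 : (1 - Real.exp (-a))^n ≤ 1 := by
      apply pow_le_one₀ h1
      have := Real.exp_pos (-a); linarith
    linarith
  have hcont : ContinuousWithinAt G (Set.Ici 0) 0 := (hderiv 0).continuousAt.continuousWithinAt
  have hder' : ∀ a ∈ Set.Ioi (0:ℝ), HasDerivAt G (1 - (1 - Real.exp (-a))^n) a :=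
    fun a _ => hderiv a
  refine ⟨integrableOn_Ioi_deriv_of_nonneg hcont hder' hnonneg hlim, ?_⟩
  rw [integral_Ioi_of_hasDerivAt_of_nonneg hcont hder' hnonneg hlim, hG]
  simp


noncomputable section


lemma E_probability : IsProbabilityMeasure E1 := isProbabilityMeasure_expMeasure one_pos

lemma expMeasure_one_apply {s : Set ℝ} (hs : MeasurableSet s) :
    E1 s = ∫⁻ x in s, exponentialPDF 1 x ∂volume := by
  rw [expMeasure, gammaMeasure, withDensity_apply _ hs]
  rfl

lemma expMeasure_one_eq : E1 = volume.withDensity (exponentialPDF 1) := rfl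

lemma E_Iic {a : ℝ} (ha : 0 ≤ a) : E1 (Set.Iic a) = ENNReal.ofReal (1 - Real.exp (-a)) := by
  rw [expMeasure_one_apply measurableSet_Iic, lintegral_exponentialPDF_eq_antiDeriv one_pos,
    if_pos ha, one_mul]

lemma E_Ioi {a : ℝ} (ha : 0 ≤ a) : E1 (Set.Ioi a) = ENNReal.ofReal (Real.exp (-a)) := by
  haveI := E_probability
  have hc : Set.Ioi a = (Set.Iic a)ᶜ := (Set.compl_Iic).symm
  rw [hc, measure_compl measurableSet_Iic (measure_ne_top _ _), E_Iic ha, measure_univ]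
  rw [← ENNReal.ofReal_one, ← ENNReal.ofReal_sub _ (by
    have := exp_pos (-a); have : Real.exp (-a) ≤ 1 := Real.exp_le_one_iff.2 (by linarith)
    linarith)]
  norm_num

lemma E_Iic_zero : E1 (Set.Iic 0) = 0 := by
  rw [E_Iic le_rfl]; simp

lemma E_ae_pos : ∀ᵐ x ∂E1, x ∈ Set.Ioi (0:ℝ) := by
  rw [ae_iff]
  have : {x : ℝ | ¬ x ∈ Set.Ioi (0:ℝ)} = Set.Iic 0 := by ext x; simp
  rw [this]; exact E_Iic_zero

lemma E_Ioi_measurable : Measurable fun t : ℝ => E1 (Set.Ioi t) :=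
  Antitone.measurable fun s t hst => measure_mono (Ioi_subset_Ioi hst)
end

noncomputable section
open ENNReal


lemma exponentialPDF_one_pos {b : ℝ} (hb : 0 ≤ b) :
    exponentialPDF 1 b = ENNReal.ofReal (Real.exp (-b)) := by
  simp [exponentialPDF_of_nonneg hb]

lemma exponentialPDF_measurable : Measurable (exponentialPDF 1) :=
  (measurable_exponentialPDFReal 1).ennreal_ofReal

lemma ofReal_expr {u v : ℝ} (hu : 0 ≤ u) (hv : 0 ≤ v) (huv : u * v ≤ 1) (m : ℕ) :
    ENNReal.ofReal v * (1 - ENNReal.ofReal u * ENNReal.ofReal v)^m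
      = ENNReal.ofReal (v * (1 - u * v)^m) := by
  rw [← ENNReal.ofReal_mul hu, ← ENNReal.ofReal_one,
    ← ENNReal.ofReal_sub _ (mul_nonneg hu hv),
    ← ENNReal.ofReal_pow (by linarith), ← ENNReal.ofReal_mul hv]

lemma mu0_Sx (x : Fin 2 → ℝ) :
    MU0 {y : Fin 2 → ℝ | ¬ ∀ l, x l < y l}
      = 1 - E1 (Set.Ioi (x 0)) * E1 (Set.Ioi (x 1)) := by
  haveI := E_probability
  have hU : {y : Fin 2 → ℝ | ∀ l, x l < y l} = Set.pi Set.univ (fun l => Set.Ioi (x l)) := by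
    ext y; simp [Set.mem_pi]
  have hOpen : {y : Fin 2 → ℝ | ¬ ∀ l, x l < y l} = ({y | ∀ l, x l < y l})ᶜ := rfl
  rw [hOpen, hU, measure_compl (MeasurableSet.univ_pi fun l => measurableSet_Ioi)
    (measure_ne_top _ _), measure_univ, Measure.pi_pi, Fin.prod_univ_two]

lemma inner_int {a : ℝ} (ha : 0 < a) (m : ℕ) :
    ∫⁻ b, (1 - E1 (Set.Ioi a) * E1 (Set.Ioi b))^m ∂E1
      = ENNReal.ofReal ((1 - (1 - Real.exp (-a))^(m+1)) / (((m:ℝ)+1) * Real.exp (-a))) := by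
  haveI := E_probability
  have hrestrict : ∫⁻ b, (1 - E1 (Set.Ioi a) * E1 (Set.Ioi b))^m ∂E1
      = ∫⁻ b in Set.Ioi 0, (1 - E1 (Set.Ioi a) * E1 (Set.Ioi b))^m ∂E1 := by
    rw [Measure.restrict_eq_self_of_ae_mem E_ae_pos]
  rw [hrestrict]
  have hmeas : Measurable fun b => (1 - E1 (Set.Ioi a) * E1 (Set.Ioi b))^m :=
    (measurable_const.sub (measurable_const.mul E_Ioi_measurable)).pow_const m
  rw [show (E1 : Measure ℝ).restrict (Set.Ioi 0)
      = (volume.restrict (Set.Ioi 0)).withDensity (exponentialPDF 1) from by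
    rw [expMeasure_one_eq, restrict_withDensity measurableSet_Ioi]]
  rw [lintegral_withDensity_eq_lintegral_mul _ exponentialPDF_measurable hmeas]
  have hcong : ∫⁻ b in Set.Ioi 0,
        (exponentialPDF 1 * fun b => (1 - E1 (Set.Ioi a) * E1 (Set.Ioi b))^m) b ∂volume
      = ∫⁻ b in Set.Ioi 0,
        ENNReal.ofReal (Real.exp (-b) * (1 - Real.exp (-a) * Real.exp (-b))^m) ∂volume := by
    apply setLIntegral_congr_fun measurableSet_Ioi
    intro b hb
    have hb0 : (0:ℝ) ≤ b := le_of_lt hb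
    simp only [Pi.mul_apply]
    rw [exponentialPDF_one_pos hb0, E_Ioi (le_of_lt ha), E_Ioi hb0]
    exact ofReal_expr (Real.exp_nonneg _) (Real.exp_nonneg _)
      (by
        have h1 := exp_neg_le_one (le_of_lt ha)
        have h2 := exp_neg_le_one hb0
        have := Real.exp_nonneg (-a)
        nlinarith [Real.exp_nonneg (-b)]) m
  rw [hcong]
  have hInt := intA (Real.exp (-a)) (Real.exp_pos _) (exp_neg_le_one (le_of_lt ha)) m
  rw [← ofReal_integral_eq_lintegral_ofReal hInt.1 ?nn, hInt.2]
  case nn =>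
    rw [Filter.EventuallyLE, ae_restrict_iff' measurableSet_Ioi]
    refine Filter.Eventually.of_forall fun b hb => ?_
    have hb0 : (0:ℝ) ≤ b := le_of_lt hb
    have h1 := exp_neg_le_one (le_of_lt ha)
    have h2 := exp_neg_le_one hb0
    have h3 := Real.exp_nonneg (-a)
    have h4 := Real.exp_nonneg (-b)
    have : Real.exp (-a) * Real.exp (-b) ≤ 1 := by nlinarith
    exact mul_nonneg h4 (pow_nonneg (by linarith) m)

lemma nuA (m : ℕ) (i : Fin (m+1)) :
    (Measure.pi fun _ : Fin (m+1) => MU0) {p | ∀ k, ¬ ∀ j, p i j < p k j}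
      = ENNReal.ofReal ((∑ k ∈ Finset.range (m+1), 1/((k:ℝ)+1)) / ((m:ℝ)+1)) := by
  haveI := E_probability
  classical
  set B : Set ((Fin 2 → ℝ) × (Fin m → Fin 2 → ℝ)) :=
    {z | ∀ j, ¬ ∀ l, z.1 l < z.2 j l} with hBdef
  have hB : MeasurableSet B := by
    have hBeq : B = ⋂ j, (⋂ l, {z : (Fin 2 → ℝ) × (Fin m → Fin 2 → ℝ) | z.1 l < z.2 j l})ᶜ := by
      ext z; simp [hBdef, or_iff_not_imp_left]
    rw [hBeq]
    exact MeasurableSet.iInter fun j => (MeasurableSet.iInter fun l => measurableSet_lt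
      (by fun_prop)
      (by fun_prop)).compl
  have he : ∀ p : Fin (m+1) → Fin 2 → ℝ,
      (MeasurableEquiv.piFinSuccAbove (fun _ : Fin (m+1) => (Fin 2 → ℝ)) i) p
        = (p i, fun j => p (i.succAbove j)) := fun p => rfl
  have hAB : {p : Fin (m+1) → Fin 2 → ℝ | ∀ k, ¬ ∀ j, p i j < p k j}
      = (MeasurableEquiv.piFinSuccAbove (fun _ : Fin (m+1) => (Fin 2 → ℝ)) i) ⁻¹' B := by
    ext p
    rw [Set.mem_preimage, he, hBdef]
    simp only [Set.mem_setOf_eq]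
    rw [Fin.forall_iff_succAbove i]
    exact ⟨fun h => h.2, fun h => ⟨fun hc => lt_irrefl _ (hc 0), h⟩⟩
  rw [hAB, (measurePreserving_piFinSuccAbove (fun _ : Fin (m+1) => MU0) i).measure_preimage
    hB.nullMeasurableSet]
  rw [Measure.prod_apply hB]
  have h3 : ∀ x : Fin 2 → ℝ, (Measure.pi fun _ : Fin m => MU0) (Prod.mk x ⁻¹' B)
      = (1 - E1 (Set.Ioi (x 0)) * E1 (Set.Ioi (x 1)))^m := by
    intro x
    have hpre : Prod.mk x ⁻¹' B
        = Set.pi Set.univ (fun _ : Fin m => {y : Fin 2 → ℝ | ¬ ∀ l, x l < y l}) := by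
      ext q; simp [hBdef, Set.mem_pi]
    rw [hpre, Measure.pi_pi]
    simp only [mu0_Sx x]
    rw [Finset.prod_const, Finset.card_univ, Fintype.card_fin]
  rw [lintegral_congr h3]
  -- transfer to E1.prod E1
  have hf : Measurable fun z : ℝ × ℝ => (1 - E1 (Set.Ioi z.1) * E1 (Set.Ioi z.2))^m :=
    (measurable_const.sub ((E_Ioi_measurable.comp measurable_fst).mul
      (E_Ioi_measurable.comp measurable_snd))).pow_const m
  have h4 := (measurePreserving_piFinTwo (fun _ : Fin 2 => E1)).lintegral_comp hf
  have h4' : ∫⁻ x : Fin 2 → ℝ, (1 - E1 (Set.Ioi (x 0)) * E1 (Set.Ioi (x 1)))^m ∂MU0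
      = ∫⁻ z : ℝ × ℝ, (1 - E1 (Set.Ioi z.1) * E1 (Set.Ioi z.2))^m ∂((expMeasure 1).prod (expMeasure 1)) := by
    rw [← h4]
    apply lintegral_congr
    intro x
    simp [MeasurableEquiv.piFinTwo_apply]
  rw [h4']
  rw [lintegral_prod _ hf.aemeasurable]
  have hrestrict : ∫⁻ a, (∫⁻ b, (1 - E1 (Set.Ioi a) * E1 (Set.Ioi b))^m ∂E1) ∂E1
      = ∫⁻ a in Set.Ioi 0, (∫⁻ b, (1 - E1 (Set.Ioi a) * E1 (Set.Ioi b))^m ∂E1) ∂E1 := by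
    rw [Measure.restrict_eq_self_of_ae_mem E_ae_pos]
  rw [hrestrict]
  have hcong1 : ∫⁻ a in Set.Ioi 0, (∫⁻ b, (1 - E1 (Set.Ioi a) * E1 (Set.Ioi b))^m ∂E1) ∂E1
      = ∫⁻ a in Set.Ioi 0, ENNReal.ofReal
          ((1 - (1 - Real.exp (-a))^(m+1)) / (((m:ℝ)+1) * Real.exp (-a))) ∂E1 := by
    apply setLIntegral_congr_fun measurableSet_Ioi
    exact fun a ha => inner_int ha m
  rw [hcong1]
  have hstuffmeas : Measurable fun a : ℝ => ENNReal.ofReal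
      ((1 - (1 - Real.exp (-a))^(m+1)) / (((m:ℝ)+1) * Real.exp (-a))) := by
    apply Measurable.ennreal_ofReal
    fun_prop
  rw [show (E1 : Measure ℝ).restrict (Set.Ioi 0)
      = (volume.restrict (Set.Ioi 0)).withDensity (exponentialPDF 1) from by
    rw [expMeasure_one_eq, restrict_withDensity measurableSet_Ioi]]
  rw [lintegral_withDensity_eq_lintegral_mul _ exponentialPDF_measurable hstuffmeas]
  have hcong2 : ∫⁻ a in Set.Ioi 0, (exponentialPDF 1 * fun a => ENNReal.ofReal
        ((1 - (1 - Real.exp (-a))^(m+1)) / (((m:ℝ)+1) * Real.exp (-a)))) a ∂volume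
      = ∫⁻ a in Set.Ioi 0, ENNReal.ofReal
          ((1 - (1 - Real.exp (-a))^(m+1)) / ((m:ℝ)+1)) ∂volume := by
    apply setLIntegral_congr_fun measurableSet_Ioi
    intro a ha
    simp only [Pi.mul_apply]
    rw [exponentialPDF_one_pos (le_of_lt ha),
      ← ENNReal.ofReal_mul (Real.exp_nonneg _)]
    congr 1
    have hexp : Real.exp (-a) ≠ 0 := (Real.exp_pos _).ne'
    field_simp
  rw [hcong2]
  have hInt : IntegrableOn (fun a : ℝ => (1 - (1 - Real.exp (-a))^(m+1)) / ((m:ℝ)+1))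
      (Set.Ioi 0) := by
    have := (intB (m+1)).1
    exact this.div_const _
  rw [← ofReal_integral_eq_lintegral_ofReal hInt ?nn2]
  case nn2 =>
    rw [Filter.EventuallyLE, ae_restrict_iff' measurableSet_Ioi]
    refine Filter.Eventually.of_forall fun a ha => ?_
    have h1 := exp_neg_le_one (le_of_lt ha)
    have h2 := Real.exp_nonneg (-a)
    have hx : (0:ℝ) ≤ 1 - Real.exp (-a) := by linarith
    have : (1 - Real.exp (-a))^(m+1) ≤ 1 := pow_le_one₀ hx (by linarith)
    have hm : (0:ℝ) < (m:ℝ)+1 := by positivity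
    exact div_nonneg (by linarith) (by linarith)
  rw [integral_div, (intB (m+1)).2]
section Assembly
open MeasureTheory ProbabilityTheory Set Filter Real


lemma E_singleton (x : ℝ) : E1 {x} = 0 := by
  rw [expMeasure_one_apply (measurableSet_singleton x)]
  exact setLIntegral_measure_zero _ _ (measure_singleton x)

lemma mu0_coord_nonpos (j : Fin 2) : MU0 {x : Fin 2 → ℝ | x j ≤ 0} = 0 := by
  haveI := E_probability
  have h : {x : Fin 2 → ℝ | x j ≤ 0}
      = Set.pi Set.univ (fun l => if l = j then Set.Iic 0 else Set.univ) := by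
    ext x
    simp only [Set.mem_setOf_eq, Set.mem_pi, Set.mem_univ, forall_true_left]
    constructor
    · intro hx l
      by_cases hl : l = j
      · subst hl; simp [hx]
      · simp [hl]
    · intro hx
      have := hx j
      simpa using this
  rw [h, Measure.pi_pi]
  refine Finset.prod_eq_zero (Finset.mem_univ j) ?_
  simp [E_Iic_zero]

lemma mu0_map_eval (j : Fin 2) : Measure.map (fun x : Fin 2 → ℝ => x j) MU0 = E1 := by
  haveI := E_probability
  refine Measure.ext fun s hs => ?_
  rw [Measure.map_apply (measurable_pi_apply j) hs]
  have h : (fun x : Fin 2 → ℝ => x j) ⁻¹' s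
      = Set.pi Set.univ (fun l => if l = j then s else Set.univ) := by
    ext x
    simp only [Set.mem_preimage, Set.mem_pi, Set.mem_univ, forall_true_left]
    constructor
    · intro hx l
      by_cases hl : l = j
      · subst hl; simp [hx]
      · simp [hl]
    · intro hx
      have := hx j
      simpa using this
  rw [h, Measure.pi_pi]
  rw [Finset.prod_eq_single j (fun l _ hlj => by simp [hlj]) (fun h => absurd (Finset.mem_univ j) h)]
  simp

lemma recCount_cast {n : ℕ} (p : Fin n → Fin 2 → ℝ) :
    ((recCount p : ℝ)) = ∑ i : Fin n, (if (∀ k, ¬ ∀ j, p i j < p k j) then (1:ℝ) else 0) := by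
  classical
  rw [recCount]
  rw [show {i : Fin n | ∀ k, ¬ ∀ j, p i j < p k j}
      = ↑(Finset.univ.filter fun i => ∀ k, ¬ ∀ j, p i j < p k j) from by ext i; simp]
  rw [Nat.card_coe_set_eq, Set.ncard_coe_finset, Finset.card_filter]
  push_cast
  exact Finset.sum_congr rfl fun i _ => by split_ifs <;> simp

variable {Ω : Type*} [MeasurableSpace Ω] (μ : Measure Ω) [IsProbabilityMeasure μ]
    (n : ℕ) (X : Fin n → Ω → Fin 2 → ℝ)

theorem stmt14' (hmeas : ∀ i, Measurable (X i))
    (hindep : iIndepFun X μ)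
    (hlaw : ∀ i, μ.map (X i) = Measure.pi fun _ : Fin 2 => expMeasure 1) :
    (∀ᵐ ω ∂μ, genCount (fun i => X i ω) = recCount (fun i => X i ω) + 1) ∧
      ∫ ω, (genCount (fun i => X i ω) : ℝ) ∂μ =
        (∑ k ∈ Finset.range n, (1 : ℝ) / (k + 1)) + 1 ∧
      ∫ ω, (genCount (fun i => X i ω) : ℝ) ∂μ =
        (∫ ω, (recCount (fun i => X i ω) : ℝ) ∂μ) + 1 := by
  classical
  haveI := E_probability
  set T : Ω → (Fin n → Fin 2 → ℝ) := fun ω i => X i ω with hTdef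
  have hT : Measurable T := measurable_pi_lambda _ fun i => hmeas i
  -- joint law
  have hjoint : μ.map T = Measure.pi (fun _ : Fin n => MU0) := by
    refine (Measure.pi_eq fun s hs => ?_).symm
    rw [Measure.map_apply hT (MeasurableSet.univ_pi hs)]
    have hpre : T ⁻¹' (Set.pi Set.univ s) = ⋂ i, X i ⁻¹' s i := by
      ext ω; simp [hTdef, Set.mem_pi]
    rw [hpre, hindep.meas_iInter (fun i => ⟨s i, hs i, rfl⟩)]
    exact Finset.prod_congr rfl fun i _ => by
      rw [← Measure.map_apply (hmeas i) (hs i), hlaw i]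
  -- a.e. positivity
  have hpos : ∀ᵐ ω ∂μ, ∀ i j, 0 < X i ω j := by
    rw [ae_all_iff]
    intro i
    rw [ae_all_iff]
    intro j
    rw [ae_iff]
    have hset : MeasurableSet {x : Fin 2 → ℝ | x j ≤ 0} :=
      measurableSet_le (measurable_pi_apply j) measurable_const
    have h : {ω | ¬ 0 < X i ω j} = X i ⁻¹' {x | x j ≤ 0} := by ext ω; simp [not_lt]
    rw [h, ← Measure.map_apply (hmeas i) hset, hlaw i]
    exact mu0_coord_nonpos j
  -- a.e. distinct coordinates
  have hdiag : ∀ (i k : Fin n), i ≠ k → ∀ (j : Fin 2), ∀ᵐ ω ∂μ, X i ω j ≠ X k ω j := by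
    intro i k hik j
    have hXij : Measurable fun ω => X i ω j := (measurable_pi_apply j).comp (hmeas i)
    have hXkj : Measurable fun ω => X k ω j := (measurable_pi_apply j).comp (hmeas k)
    have hIF : IndepFun (fun ω => X i ω j) (fun ω => X k ω j) μ :=
      (hindep.indepFun hik).comp (measurable_pi_apply j) (measurable_pi_apply j)
    have hmap : ∀ l : Fin n, μ.map (fun ω => X l ω j) = E1 := fun l => by
      rw [show (fun ω => X l ω j) = (fun x : Fin 2 → ℝ => x j) ∘ (X l) from rfl,
        ← Measure.map_map (measurable_pi_apply j) (hmeas l), hlaw l, mu0_map_eval]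
    have hpair := (indepFun_iff_map_prod_eq_prod_map_map hXij.aemeasurable
      hXkj.aemeasurable).1 hIF
    rw [hmap i, hmap k] at hpair
    have hD : MeasurableSet {z : ℝ × ℝ | z.1 = z.2} :=
      measurableSet_eq_fun measurable_fst measurable_snd
    rw [ae_iff]
    have h : {ω | ¬ X i ω j ≠ X k ω j}
        = (fun ω => (X i ω j, X k ω j)) ⁻¹' {z : ℝ × ℝ | z.1 = z.2} := by
      ext ω; simp
    rw [h, ← Measure.map_apply (hXij.prodMk hXkj) hD, hpair, Measure.prod_apply hD]
    have hfib : ∀ x : ℝ, (Prod.mk x ⁻¹' {z : ℝ × ℝ | z.1 = z.2}) = {x} := by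
      intro x; ext y; simp [eq_comm]
    simp only [hfib, E_singleton]
    simp
  have hdist : ∀ᵐ ω ∂μ, ∀ i k : Fin n, i ≠ k →
      ((fun i => X i ω) i 0 ≠ (fun i => X i ω) k 0) ∧
      ((fun i => X i ω) i 1 ≠ (fun i => X i ω) k 1) := by
    rw [ae_all_iff]
    intro i
    rw [ae_all_iff]
    intro k
    by_cases hik : i = k
    · exact Filter.Eventually.of_forall fun ω h => absurd hik h
    · filter_upwards [hdiag i k hik 0, hdiag i k hik 1] with ω h0 h1 _
      exact ⟨h0, h1⟩
  -- part 1 : a.e. identity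
  have hae : ∀ᵐ ω ∂μ, genCount (fun i => X i ω) = recCount (fun i => X i ω) + 1 := by
    filter_upwards [hpos, hdist] with ω h1 h2
    exact genCount_eq_recCount_add_one (fun i j => h1 i j)
      (fun i k hik => (h2 i k hik).1) (fun i k hik => (h2 i k hik).2)
  -- measurable record sets
  have hAi : ∀ i : Fin n, MeasurableSet {p : Fin n → Fin 2 → ℝ | ∀ k, ¬ ∀ j, p i j < p k j} := by
    intro i
    have heq : {p : Fin n → Fin 2 → ℝ | ∀ k, ¬ ∀ j, p i j < p k j}
        = ⋂ k, (⋂ j, {p : Fin n → Fin 2 → ℝ | p i j < p k j})ᶜ := by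
      ext p; simp [or_iff_not_imp_left]
    rw [heq]
    exact MeasurableSet.iInter fun k => (MeasurableSet.iInter fun j => measurableSet_lt
      (by fun_prop)
      (by fun_prop)).compl
  set AΩ : Fin n → Set Ω :=
    fun i => T ⁻¹' {p : Fin n → Fin 2 → ℝ | ∀ k, ¬ ∀ j, p i j < p k j} with hAΩdef
  have hAΩmeas : ∀ i, MeasurableSet (AΩ i) := fun i => hT (hAi i)
  have hmuAΩ : ∀ i : Fin n, μ (AΩ i)
      = ENNReal.ofReal ((∑ k ∈ Finset.range n, (1:ℝ)/(k+1)) / n) := by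
    intro i
    rw [hAΩdef, ← Measure.map_apply hT (hAi i), hjoint]
    obtain ⟨m, rfl⟩ := Nat.exists_eq_succ_of_ne_zero i.pos.ne'
    rw [nuA m i]
    norm_num
  -- pointwise sum formula
  have hsum : ∀ ω, (recCount (fun i => X i ω) : ℝ)
      = ∑ i : Fin n, Set.indicator (AΩ i) (fun _ => (1:ℝ)) ω := by
    intro ω
    rw [recCount_cast]
    refine Finset.sum_congr rfl fun i _ => ?_
    rw [Set.indicator_apply]
    exact if_congr Iff.rfl rfl rfl
  have hrec_integrable : Integrable (fun ω => (recCount (fun i => X i ω) : ℝ)) μ := by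
    refine (integrable_finset_sum Finset.univ fun i _ =>
      (integrable_const (1:ℝ)).indicator (hAΩmeas i)).congr ?_
    exact Filter.Eventually.of_forall fun ω => (hsum ω).symm
  have hHnonneg : 0 ≤ (∑ k ∈ Finset.range n, (1:ℝ)/(k+1)) / n := by positivity
  have hrecint : ∫ ω, (recCount (fun i => X i ω) : ℝ) ∂μ
      = ∑ k ∈ Finset.range n, (1:ℝ)/(k+1) := by
    rw [integral_congr_ae (Filter.Eventually.of_forall hsum),
      integral_finset_sum _ (fun i _ => (integrable_const (1:ℝ)).indicator (hAΩmeas i))]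
    have : ∀ i : Fin n, ∫ ω, Set.indicator (AΩ i) (fun _ => (1:ℝ)) ω ∂μ
        = (∑ k ∈ Finset.range n, (1:ℝ)/(k+1)) / n := by
      intro i
      rw [integral_indicator_const (1:ℝ) (hAΩmeas i), measureReal_def, hmuAΩ i, smul_eq_mul, mul_one,
        ENNReal.toReal_ofReal hHnonneg]
    rw [Finset.sum_congr rfl fun i _ => this i, Finset.sum_const, Finset.card_univ,
      Fintype.card_fin, nsmul_eq_mul]
    rcases Nat.eq_zero_or_pos n with h | h
    · subst h; simp
    · have : (n:ℝ) ≠ 0 := Nat.cast_ne_zero.2 h.ne'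
      field_simp
  have hgenint : ∫ ω, (genCount (fun i => X i ω) : ℝ) ∂μ
      = (∫ ω, (recCount (fun i => X i ω) : ℝ) ∂μ) + 1 := by
    have hcongr : (fun ω => (genCount (fun i => X i ω) : ℝ))
        =ᵐ[μ] fun ω => (recCount (fun i => X i ω) : ℝ) + 1 := by
      filter_upwards [hae] with ω h
      rw [h]; push_cast; ring
    rw [integral_congr_ae hcongr, integral_add hrec_integrable (integrable_const 1),
      integral_const, measureReal_def, measure_univ]
    simp
  exact ⟨hae, by rw [hgenint, hrecint], hgenint⟩

end Assembly

theorem stmt14 {Ω : Type*} [MeasurableSpace Ω] (μ : Measure Ω) [IsProbabilityMeasure μ]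
    (n : ℕ) (X : Fin n → Ω → Fin 2 → ℝ)
    (hmeas : ∀ i, Measurable (X i))
    (hindep : iIndepFun X μ)
    (hlaw : ∀ i, μ.map (X i) = Measure.pi fun _ : Fin 2 => expMeasure 1) :
    (∀ᵐ ω ∂μ, genCount (fun i => X i ω) = recCount (fun i => X i ω) + 1) ∧
      ∫ ω, (genCount (fun i => X i ω) : ℝ) ∂μ =
        (∑ k ∈ Finset.range n, (1 : ℝ) / (k + 1)) + 1 ∧
      ∫ ω, (genCount (fun i => X i ω) : ℝ) ∂μ =
        (∫ ω, (recCount (fun i => X i ω) : ℝ) ∂μ) + 1 :=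
  stmt14' μ n X hmeas hindep hlaw
end
end
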